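/- arXiv:1203.6422 — 2 statements merged into one kernel-verified Lean document; each statement's English description precedes it below -/
import Mathlib

section
/- Let φ* be the 4×4 matrix [[-1,0,0,0],[0,-1,0,0],[0,0,-1,0],[0,0,1,-1]] acting on ℝ⁴ (representing the action on H¹(T⁴)). Then the induced map Λ²φ* on Λ²(ℝ⁴) ≅ ℝ⁶ has eigenvalue 1, and ker(Λ²φ* − id) ∩ im(Λ²φ* − id) ≠ {0}; in particular (X−1)² divides the minimal polynomial of Λ²φ*. -/
set_option maxHeartbeats 1000000


open Polynomial ExteriorAlgebra

/-- The linear map on `ℝ⁴` given by the matrix `[[-1,0,0,0],[0,-1,0,0],[0,0,-1,0],[0,0,1,-1]]`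
(columns: `e¹ ↦ −e¹`, `e² ↦ −e²`, `e³ ↦ −e³ + e⁴`, `e⁴ ↦ −e⁴`). -/
def phiStar : (Fin 4 → ℝ) →ₗ[ℝ] (Fin 4 → ℝ) :=
  (!![-1,0,0,0; 0,-1,0,0; 0,0,-1,0; 0,0,1,-1] : Matrix (Fin 4) (Fin 4) ℝ).mulVecLin

lemma phiStar_maps_exteriorPower :
    ∀ x ∈ ⋀[ℝ]^2 (Fin 4 → ℝ), (ExteriorAlgebra.map phiStar) x ∈ ⋀[ℝ]^2 (Fin 4 → ℝ) := by
  intro x hx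
  have hrange : Submodule.map (ExteriorAlgebra.map phiStar).toLinearMap
      (LinearMap.range (ι ℝ : (Fin 4 → ℝ) →ₗ[ℝ] ExteriorAlgebra ℝ (Fin 4 → ℝ)))
      ≤ LinearMap.range (ι ℝ) := by
    rintro y ⟨z, ⟨m, rfl⟩, rfl⟩
    exact ⟨phiStar m, (map_apply_ι _ m).symm⟩
  have : Submodule.map (ExteriorAlgebra.map phiStar).toLinearMap (⋀[ℝ]^2 (Fin 4 → ℝ))
      ≤ ⋀[ℝ]^2 (Fin 4 → ℝ) := by
    rw [show (⋀[ℝ]^2 (Fin 4 → ℝ))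
        = (LinearMap.range (ι ℝ : (Fin 4 → ℝ) →ₗ[ℝ] ExteriorAlgebra ℝ (Fin 4 → ℝ))) ^ 2
        from rfl, Submodule.map_pow]
    exact pow_le_pow_left' hrange 2
  exact this ⟨x, hx, rfl⟩

/-- The induced endomorphism `Λ²φ*` of the second exterior power `Λ²(ℝ⁴)`. -/
noncomputable def lambda2PhiStar : ⋀[ℝ]^2 (Fin 4 → ℝ) →ₗ[ℝ] ⋀[ℝ]^2 (Fin 4 → ℝ) :=
  LinearMap.restrict (ExteriorAlgebra.map phiStar).toLinearMap phiStar_maps_exteriorPower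

/- ### auxiliary material -/

noncomputable def detMap : (Fin 4 → ℝ) [⋀^Fin 2]→ₗ[ℝ] ℝ :=
  (Matrix.detRowAlternating : (Fin 2 → ℝ) [⋀^Fin 2]→ₗ[ℝ] ℝ).compLinearMap
    (LinearMap.funLeft ℝ ℝ (![0, 3] : Fin 2 → Fin 4))

noncomputable def detFam : ∀ i : ℕ, (Fin 4 → ℝ) [⋀^Fin i]→ₗ[ℝ] ℝ
  | 2 => detMap
  | _ => 0

noncomputable def w (i : Fin 4) : ExteriorAlgebra ℝ (Fin 4 → ℝ) := ι ℝ (Pi.single i 1)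

lemma w03_ne_zero : w 0 * w 3 ≠ 0 := by
  intro h
  have h' : liftAlternating detFam (w 0 * w 3) = 1 := by
    show liftAlternating detFam
      (ι ℝ (Pi.single 0 1 : Fin 4 → ℝ) * ι ℝ (Pi.single 3 1 : Fin 4 → ℝ)) = 1
    rw [liftAlternating_ι_mul, liftAlternating_ι]
    show detMap ![Pi.single 0 1, Pi.single 3 1] = 1
    simp only [detMap, AlternatingMap.compLinearMap_apply]
    rw [show ∀ v : Fin 2 → (Fin 2 → ℝ), Matrix.detRowAlternating v = Matrix.det (Matrix.of v)
      from fun _ => rfl, Matrix.det_fin_two]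
    simp [LinearMap.funLeft_apply, Pi.single_apply]
  rw [h, map_zero] at h'
  exact zero_ne_one h'

lemma hphi0 : phiStar (Pi.single 0 1) = -Pi.single 0 1 := by
  funext i
  fin_cases i <;>
    simp [phiStar, Matrix.mulVecLin_apply, Matrix.mulVec, dotProduct,
      Fin.sum_univ_four, Pi.single_apply]

lemma hphi2 : phiStar (Pi.single 2 1) = -Pi.single 2 1 + Pi.single 3 1 := by
  funext i
  fin_cases i <;>
    simp [phiStar, Matrix.mulVecLin_apply, Matrix.mulVec, dotProduct,
      Fin.sum_univ_four, Pi.single_apply]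

lemma hphi3 : phiStar (Pi.single 3 1) = -Pi.single 3 1 := by
  funext i
  fin_cases i <;>
    simp [phiStar, Matrix.mulVecLin_apply, Matrix.mulVec, dotProduct,
      Fin.sum_univ_four, Pi.single_apply]

lemma mem_pow2 (i j : Fin 4) : w i * w j ∈ ⋀[ℝ]^2 (Fin 4 → ℝ) := by
  rw [show (⋀[ℝ]^2 (Fin 4 → ℝ))
      = (LinearMap.range (ι ℝ : (Fin 4 → ℝ) →ₗ[ℝ] ExteriorAlgebra ℝ (Fin 4 → ℝ))) ^ 2
      from rfl, pow_two]
  exact Submodule.mul_mem_mul (LinearMap.mem_range_self _ _) (LinearMap.mem_range_self _ _)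

noncomputable def U : ⋀[ℝ]^2 (Fin 4 → ℝ) := ⟨w 0 * w 2, mem_pow2 0 2⟩
noncomputable def V : ⋀[ℝ]^2 (Fin 4 → ℝ) := ⟨w 0 * w 3, mem_pow2 0 3⟩

lemma map_w02 : ExteriorAlgebra.map phiStar (w 0 * w 2) = w 0 * w 2 - w 0 * w 3 := by
  show ExteriorAlgebra.map phiStar (ι ℝ (Pi.single 0 1) * ι ℝ (Pi.single 2 1))
    = ι ℝ (Pi.single 0 1) * ι ℝ (Pi.single 2 1) - ι ℝ (Pi.single 0 1) * ι ℝ (Pi.single 3 1)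
  rw [map_mul, map_apply_ι, map_apply_ι, hphi0, hphi2, map_neg, map_add, map_neg]
  noncomm_ring

lemma map_w03 : ExteriorAlgebra.map phiStar (w 0 * w 3) = w 0 * w 3 := by
  show ExteriorAlgebra.map phiStar (ι ℝ (Pi.single 0 1) * ι ℝ (Pi.single 3 1))
    = ι ℝ (Pi.single 0 1) * ι ℝ (Pi.single 3 1)
  rw [map_mul, map_apply_ι, map_apply_ι, hphi0, hphi3, map_neg, map_neg]
  noncomm_ring

lemma fU : lambda2PhiStar U = U - V := by
  apply Subtype.ext
  show (ExteriorAlgebra.map phiStar).toLinearMap (w 0 * w 2) = w 0 * w 2 - w 0 * w 3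
  exact map_w02

lemma fV : lambda2PhiStar V = V := by
  apply Subtype.ext
  show (ExteriorAlgebra.map phiStar).toLinearMap (w 0 * w 3) = w 0 * w 3
  exact map_w03

lemma Vne : V ≠ 0 := fun h => w03_ne_zero (congrArg Subtype.val h)

/-- `Λ²φ*` has eigenvalue 1, `ker(Λ²φ* − id) ∩ im(Λ²φ* − id) ≠ {0}`, and `(X−1)²`
divides its minimal polynomial. -/
theorem stmt7 :
    Module.End.HasEigenvalue lambda2PhiStar 1 ∧
    LinearMap.ker (lambda2PhiStar - LinearMap.id) ⊓
      LinearMap.range (lambda2PhiStar - LinearMap.id) ≠ ⊥ ∧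
    (X - 1) ^ 2 ∣ minpoly ℝ lambda2PhiStar := by
  refine ⟨?_, ?_, ?_⟩
  · exact Module.End.hasEigenvalue_of_hasEigenvector
      ⟨Module.End.mem_eigenspace_iff.mpr (by rw [one_smul]; exact fV), Vne⟩
  · rw [Submodule.ne_bot_iff]
    refine ⟨V, Submodule.mem_inf.mpr ⟨?_, LinearMap.mem_range.mpr ⟨-U, ?_⟩⟩, Vne⟩
    · rw [LinearMap.mem_ker, LinearMap.sub_apply, LinearMap.id_apply, fV, sub_self]
    · rw [LinearMap.sub_apply, LinearMap.id_apply, map_neg, fU]; abel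
  · set q : ℝ[X] := (X - 1) ^ 2 with hq
    have hmq : q.Monic := by
      rw [hq, show (X : ℝ[X]) - 1 = X - C 1 by rw [map_one]]
      exact (monic_X_sub_C 1).pow 2
    rw [← modByMonic_eq_zero_iff_dvd hmq]
    set p := minpoly ℝ lambda2PhiStar with hp
    set r := p %ₘ q with hr
    have hdeg1 : r.degree ≤ 1 := by
      rcases eq_or_ne r 0 with h0 | h0
      · simp [h0]
      · have hdeg : r.degree < 2 := by
          have := degree_modByMonic_lt p hmq
          have h2 : q.degree = 2 := by
            rw [hq, show (X : ℝ[X]) - 1 = X - C 1 by rw [map_one], degree_pow, degree_X_sub_C]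
            rfl
          rwa [h2] at this
        have h1 : r.natDegree ≤ 1 :=
          Nat.lt_succ_iff.mp ((natDegree_lt_iff_degree_lt h0).mpr hdeg)
        exact degree_le_natDegree.trans (by exact_mod_cast h1)
    have hrform := eq_X_add_C_of_degree_le_one hdeg1
    set a := r.coeff 1 with ha'
    set b := r.coeff 0 with hb'
    have hsplit : (p /ₘ q) * q + r = p := by rw [hr, add_comm, mul_comm]
                                             exact modByMonic_add_div p q
    have hsub : Polynomial.aeval lambda2PhiStar ((X : ℝ[X]) - 1) = lambda2PhiStar - 1 := by
      simp
    have hfV0 : (lambda2PhiStar - 1) V = 0 := by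
      rw [LinearMap.sub_apply, Module.End.one_apply, fV, sub_self]
    have hfU0 : (lambda2PhiStar - 1) U = -V := by
      rw [LinearMap.sub_apply, Module.End.one_apply, fU]; abel
    have hgV : (Polynomial.aeval lambda2PhiStar q) V = 0 := by
      rw [hq, map_pow, hsub, pow_two, Module.End.mul_apply, hfV0, map_zero]
    have hgU : (Polynomial.aeval lambda2PhiStar q) U = 0 := by
      rw [hq, map_pow, hsub, pow_two, Module.End.mul_apply, hfU0, map_neg, hfV0, neg_zero]
    have key : ∀ x : ⋀[ℝ]^2 (Fin 4 → ℝ), (Polynomial.aeval lambda2PhiStar q) x = 0 →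
        (Polynomial.aeval lambda2PhiStar r) x = 0 := by
      intro x hx
      have h1 := congrArg (fun s : ℝ[X] => (Polynomial.aeval lambda2PhiStar s) x) hsplit
      simp only [map_add, map_mul, LinearMap.add_apply, Module.End.mul_apply] at h1
      rw [hx, map_zero, zero_add] at h1
      have h0 : (Polynomial.aeval lambda2PhiStar) (minpoly ℝ lambda2PhiStar) = 0 :=
        minpoly.aeval ℝ lambda2PhiStar
      rw [h1, hp, h0, LinearMap.zero_apply]
    have hrV : a • V + b • V = 0 := by
      have h := key V hgV
      rw [hrform] at h
      simpa only [map_add, map_mul, aeval_X, aeval_C, LinearMap.add_apply, Module.End.mul_apply,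
        Module.algebraMap_end_apply, fV] using h
    have hrU : a • (U - V) + b • U = 0 := by
      have h := key U hgU
      rw [hrform] at h
      simpa only [map_add, map_mul, aeval_X, aeval_C, LinearMap.add_apply, Module.End.mul_apply,
        Module.algebraMap_end_apply, fU] using h
    have habV : a + b = 0 := by
      have hab : (a + b) • V = 0 := by rw [add_smul]; exact hrV
      rcases smul_eq_zero.mp hab with h | h
      · exact h
      · exact absurd h Vne
    have ha0 : a = 0 := by
      have h3 := hrU
      rw [smul_sub, sub_add_eq_add_sub, sub_eq_zero] at h3
      have h5 : a • V = (a + b) • U := by rw [add_smul]; exact h3.symm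
      rw [habV, zero_smul] at h5
      rcases smul_eq_zero.mp h5 with h | h
      · exact h
      · exact absurd h Vne
    have hb0 : b = 0 := by rwa [ha0, zero_add] at habV
    rw [hrform, ha0, hb0]
    simp
end

section
/- The matrix φ* = [[-1,0,0,0],[0,-1,0,0],[0,0,-1,0],[0,0,1,-1]] is not the exponential of any real 4×4 matrix: there is no g ∈ M₄(ℝ) with exp(g) = φ*. -/
open Matrix
open scoped ComplexOrder

noncomputable section

/-- Rank-nullity for 4×4 complex matrices. -/
lemma rank_nullity4 (M : Matrix (Fin 4) (Fin 4) ℂ) :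
    M.rank + Module.finrank ℂ (LinearMap.ker M.mulVecLin) = 4 := by
  have h := LinearMap.finrank_range_add_finrank_ker M.mulVecLin
  rw [Module.finrank_fin_fun] at h
  simpa [Matrix.rank] using h

/-- The rank of the entrywise conjugate equals the rank. -/
lemma rank_map_star (M : Matrix (Fin 4) (Fin 4) ℂ) :
    (M.map (starRingEnd ℂ)).rank = M.rank := by
  have h : M.map (starRingEnd ℂ) = (Mᴴ)ᵀ := by
    ext i j; simp [Matrix.conjTranspose]
  rw [h, Matrix.rank_transpose, Matrix.rank_conjTranspose]

/-- The matrix `φ* = [[-1,0,0,0],[0,-1,0,0],[0,0,-1,0],[0,0,1,-1]]` is not the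
exponential of any real 4×4 matrix. -/
theorem stmt9 :
    ¬ ∃ g : Matrix (Fin 4) (Fin 4) ℝ,
      NormedSpace.exp g =
        (!![-1,0,0,0; 0,-1,0,0; 0,0,-1,0; 0,0,1,-1] : Matrix (Fin 4) (Fin 4) ℝ) := by
  rintro ⟨g, hg⟩
  -- `B` is a real square root of `φ*`
  set A : Matrix (Fin 4) (Fin 4) ℝ :=
    (!![-1,0,0,0; 0,-1,0,0; 0,0,-1,0; 0,0,1,-1] : Matrix (Fin 4) (Fin 4) ℝ) with hA
  set B : Matrix (Fin 4) (Fin 4) ℝ := NormedSpace.exp ((1/2 : ℝ) • g) with hBdef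
  have hhalf : (1/2:ℝ) • g + (1/2:ℝ) • g = g := by
    rw [← add_smul]; norm_num
  have hB : B * B = A := by
    rw [hBdef, ← Matrix.exp_add_of_commute _ _ (Commute.refl _), hhalf, hg]
  -- complexify
  set C : Matrix (Fin 4) (Fin 4) ℂ := B.map (Complex.ofRealHom) with hCdef
  set Ac : Matrix (Fin 4) (Fin 4) ℂ :=
    (!![-1,0,0,0; 0,-1,0,0; 0,0,-1,0; 0,0,1,-1] : Matrix (Fin 4) (Fin 4) ℂ) with hAc
  have hC : C * C = Ac := by
    have := congrArg (Complex.ofRealHom.mapMatrix :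
      Matrix (Fin 4) (Fin 4) ℝ →+* Matrix (Fin 4) (Fin 4) ℂ) hB
    rw [_root_.map_mul] at this
    rw [hCdef]
    convert this using 1
    · rfl
    rw [hAc, hA]
    ext i j
    fin_cases i <;> fin_cases j <;>
      simp [RingHom.mapMatrix_apply, Matrix.map_apply, Matrix.vecHead, Matrix.vecTail]
  set N : Matrix (Fin 4) (Fin 4) ℂ := Ac + 1 with hN
  set P : Matrix (Fin 4) (Fin 4) ℂ := C - Complex.I • 1 with hP
  set Q : Matrix (Fin 4) (Fin 4) ℂ := C + Complex.I • 1 with hQ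
  have hPQ : P * Q = N := by
    rw [hP, hQ, hN, ← hC]
    simp only [mul_add, sub_mul, Matrix.smul_mul, Matrix.mul_smul, mul_one, one_mul,
      smul_smul, Complex.I_mul_I]
    simp [sub_eq_add_neg]
  have hQP : Q * P = N := by
    rw [hQ, hP, hN, ← hC]
    simp only [mul_sub, add_mul, Matrix.smul_mul, Matrix.mul_smul, mul_one, one_mul,
      smul_smul, Complex.I_mul_I]
    simp [sub_eq_add_neg]
    abel
  set K1 := LinearMap.ker P.mulVecLin with hK1
  set K2 := LinearMap.ker Q.mulVecLin with hK2
  -- the two kernels intersect trivially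
  have hinf : K1 ⊓ K2 = ⊥ := by
    rw [eq_bot_iff]
    rintro v ⟨hv1, hv2⟩
    have h1 : P.mulVec v = 0 := hv1
    have h2 : Q.mulVec v = 0 := hv2
    have : Q.mulVec v - P.mulVec v = (2 * Complex.I) • v := by
      rw [← Matrix.sub_mulVec, hQ, hP]
      have : C + Complex.I • 1 - (C - Complex.I • 1) = (2 * Complex.I) • (1 : Matrix (Fin 4) (Fin 4) ℂ) := by
        rw [two_mul, add_smul]; abel
      rw [this, Matrix.smul_mulVec, Matrix.one_mulVec]
    rw [h1, h2, sub_zero] at this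
    have h2I : (2 * Complex.I) ≠ 0 := by simp [Complex.I_ne_zero]
    have : v = 0 := by
      have := congrArg (fun w => (2 * Complex.I)⁻¹ • w) this.symm
      simpa [smul_smul, inv_mul_cancel₀ h2I] using this
    simp [this]
  -- the kernel of N is the sup of the two kernels
  have hsup : LinearMap.ker N.mulVecLin = K1 ⊔ K2 := by
    apply le_antisymm
    · intro v hv
      have hvN : N.mulVec v = 0 := hv
      have w1mem : ((2 * Complex.I)⁻¹ • Q.mulVec v) ∈ K1 := by
        rw [hK1, LinearMap.mem_ker]
        show P.mulVec ((2 * Complex.I)⁻¹ • Q.mulVec v) = 0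
        rw [Matrix.mulVec_smul, Matrix.mulVec_mulVec, hPQ, hvN, smul_zero]
      have w2mem : (-((2 * Complex.I)⁻¹) • P.mulVec v) ∈ K2 := by
        rw [hK2, LinearMap.mem_ker]
        show Q.mulVec (-((2 * Complex.I)⁻¹) • P.mulVec v) = 0
        rw [Matrix.mulVec_smul, Matrix.mulVec_mulVec, hQP, hvN, smul_zero]
      have hvsum : v = (2 * Complex.I)⁻¹ • Q.mulVec v + (-((2 * Complex.I)⁻¹) • P.mulVec v) := by
        have h2I : (2 * Complex.I) ≠ 0 := by simp [Complex.I_ne_zero]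
        rw [neg_smul, ← sub_eq_add_neg, ← smul_sub, ← Matrix.sub_mulVec]
        have : Q - P = (2 * Complex.I) • (1 : Matrix (Fin 4) (Fin 4) ℂ) := by
          rw [hQ, hP, two_mul, add_smul]; abel
        rw [this, Matrix.smul_mulVec, Matrix.one_mulVec, smul_smul,
          inv_mul_cancel₀ h2I, one_smul]
      rw [hvsum]
      exact Submodule.add_mem_sup w1mem w2mem
    · rw [sup_le_iff]
      constructor
      · intro v hv
        have h1 : P.mulVec v = 0 := hv
        show N.mulVec v = 0
        rw [← hQP, ← Matrix.mulVec_mulVec, h1, Matrix.mulVec_zero]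
      · intro v hv
        have h1 : Q.mulVec v = 0 := hv
        show N.mulVec v = 0
        rw [← hPQ, ← Matrix.mulVec_mulVec, h1, Matrix.mulVec_zero]
  -- the kernel of N has dimension 3
  have hkerN : Module.finrank ℂ (LinearMap.ker N.mulVecLin) = 3 := by
    have heq : LinearMap.ker N.mulVecLin =
        LinearMap.ker (LinearMap.proj (R := ℂ) (φ := fun _ : Fin 4 => ℂ) 2) := by
      ext v
      rw [LinearMap.mem_ker, LinearMap.mem_ker]
      constructor
      · intro h
        have := congrFun h 3
        simpa [hN, hAc, Matrix.mulVecLin, Matrix.mulVec, dotProduct,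
          Fin.sum_univ_four] using this
      · intro h
        have hv2 : v 2 = 0 := h
        ext i
        fin_cases i <;>
          simp [hN, hAc, Matrix.mulVecLin, Matrix.mulVec, dotProduct,
            Fin.sum_univ_four, hv2]
    rw [heq]
    have hsurj : Function.Surjective (LinearMap.proj (R := ℂ) (φ := fun _ : Fin 4 => ℂ) 2) := by
      intro c; exact ⟨fun _ => c, rfl⟩
    have h := LinearMap.finrank_range_add_finrank_ker
      (LinearMap.proj (R := ℂ) (φ := fun _ : Fin 4 => ℂ) 2)
    rw [LinearMap.range_eq_top.mpr hsurj, finrank_top, Module.finrank_self,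
      Module.finrank_fin_fun] at h
    omega
  -- the two kernels have equal dimension
  have hQstar : P.map (starRingEnd ℂ) = Q := by
    rw [hP, hQ, hCdef]
    ext i j
    simp [Matrix.map, Matrix.one_apply]
    split <;> simp
  have hrankPQ : P.rank = Q.rank := by rw [← hQstar, rank_map_star]
  have hd1 := rank_nullity4 P
  have hd2 := rank_nullity4 Q
  have hdim : Module.finrank ℂ K1 = Module.finrank ℂ K2 := by
    rw [hK1, hK2]; omega
  -- conclude: 3 is even, contradiction
  have hfin := Submodule.finrank_sup_add_finrank_inf_eq K1 K2
  rw [hinf, finrank_bot, ← hsup, hkerN] at hfin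
  omega

end
end
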